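/- There exists a set X with a group action of all (not necessarily finite) permutations of atoms, and an element x ∈ X, such that x is supported by the empty set (every finite permutation fixes x) yet the infinite 'shift' permutation does not fix x. Concretely, fix a bijection f between the atoms A and the integers ℤ; let shift be the permutation a ↦ f⁻¹(f(a)+1); let x be the set of all sequences (π(f⁻¹(0)), π(f⁻¹(-1)), π(f⁻¹(1)), π(f⁻¹(-2)), ...) for π ranging over finite permutations, with permutations acting pointwise on sequences. Then every finite permutation fixes x but shift·x ≠ x. -/

import Mathlib

open Pointwise

abbrev Atom := ℤ
abbrev APerm := Equiv.Perm Atom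

def Aneg : Set Atom := {a | a < 0}
def Apos : Set Atom := {a | 0 ≤ a}

/-- A finite permutation: moves only finitely many atoms. -/
def FinitePerm (π : APerm) : Prop := {a : Atom | π a ≠ a}.Finite

/-- A permission set: (A< ∪ P) \ Q with P ⊆ A>, Q ⊆ A< finite. -/
def IsPermissionSet (S : Set Atom) : Prop :=
  ∃ P Q : Finset Atom, (P : Set Atom) ⊆ Apos ∧ (Q : Set Atom) ⊆ Aneg ∧
    S = (Aneg ∪ (P : Set Atom)) \ (Q : Set Atom)

/-- A set of atoms B supports x when every finite permutation fixing B pointwise fixes x. -/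
def Supports {X : Type*} [MulAction APerm X] (B : Set Atom) (x : X) : Prop :=
  ∀ π : APerm, FinitePerm π → (∀ a ∈ B, π a = a) → π • x = x

/-- The least support: intersection of all supporting sets. -/
def supp {X : Type*} [MulAction APerm X] (x : X) : Set Atom :=
  ⋂₀ {B : Set Atom | Supports B x}

/-- A permissive-nominal set: every element is supported by some permission set. -/
def IsPNSet (X : Type*) [MulAction APerm X] : Prop :=
  ∀ x : X, ∃ S : Set Atom, IsPermissionSet S ∧ Supports S x

/-- The enumeration 0, -1, 1, -2, 2, ... of the atoms (= ℤ). -/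
def enumAtom (n : ℕ) : Atom := if n % 2 = 0 then (n / 2 : ℤ) else -((n / 2 : ℤ) + 1)

/-- The shift permutation a ↦ a + 1 (via the identity bijection f : Atom → ℤ). -/
def shiftPerm : APerm := Equiv.addRight 1

/-- Pointwise action of a permutation on a set of sequences of atoms. -/
def pactSeq (π : APerm) (S : Set (ℕ → Atom)) : Set (ℕ → Atom) :=
  (fun s => fun n => π (s n)) '' S

/-- The set of all sequences (π(0), π(-1), π(1), π(-2), ...) for π finite. -/
def fuzzyX : Set (ℕ → Atom) :=
  {s | ∃ π : APerm, FinitePerm π ∧ s = fun n => π (enumAtom n)}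

/-- There is an element supported by the empty set (every finite permutation fixes it)
which is not fixed by the shift permutation. -/
lemma finitePerm_trans {π σ : APerm} (hπ : FinitePerm π) (hσ : FinitePerm σ) :
    FinitePerm (σ.trans π) := by
  apply Set.Finite.subset (hσ.union hπ)
  intro a ha
  simp only [Set.mem_setOf_eq, Equiv.trans_apply] at ha ⊢
  by_cases h : σ a = a
  · right; rwa [h] at ha
  · left; exact h

lemma finitePerm_symm {π : APerm} (hπ : FinitePerm π) : FinitePerm π.symm := by
  apply Set.Finite.subset (hπ.image π)
  intro a ha
  refine ⟨π.symm a, ?_, by simp⟩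
  simp only [Set.mem_setOf_eq] at ha ⊢
  intro hc
  exact ha (by conv_lhs => rw [← hc]; simp)

lemma enumAtom_surj : Function.Surjective enumAtom := by
  intro a
  obtain ⟨b, rfl⟩ : ∃ b : ℤ, b = a := ⟨a, rfl⟩
  rcases le_or_gt 0 b with h | h
  · refine ⟨(2 * b).toNat, ?_⟩
    have h2 : ((2 * b).toNat : ℤ) = 2 * b := Int.toNat_of_nonneg (by omega)
    have hm : (2 * b).toNat % 2 = 0 := by omega
    rw [enumAtom, if_pos hm]
    show (((2 * b).toNat : ℤ) / 2 : ℤ) = b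
    omega
  · refine ⟨(2 * (-b) - 1).toNat, ?_⟩
    have h2 : ((2 * (-b) - 1).toNat : ℤ) = 2 * (-b) - 1 := Int.toNat_of_nonneg (by omega)
    have hm : (2 * (-b) - 1).toNat % 2 = 1 := by omega
    rw [enumAtom, if_neg (by omega)]
    show (-((((2 * (-b) - 1).toNat : ℤ) / 2 : ℤ) + 1) : ℤ) = b
    omega

theorem stmt_3 :
    (∀ π : APerm, FinitePerm π → pactSeq π fuzzyX = fuzzyX) ∧
    pactSeq shiftPerm fuzzyX ≠ fuzzyX := by
  constructor
  · intro π hπ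
    ext s
    constructor
    · rintro ⟨t, ⟨σ, hσ, rfl⟩, rfl⟩
      exact ⟨σ.trans π, finitePerm_trans hπ hσ, rfl⟩
    · rintro ⟨σ, hσ, rfl⟩
      exact ⟨fun n => π.symm (σ (enumAtom n)),
        ⟨σ.trans π.symm, finitePerm_trans (finitePerm_symm hπ) hσ, rfl⟩,
        by funext n; simp⟩
  · intro h
    have hmem : (fun n => shiftPerm (enumAtom n)) ∈ pactSeq shiftPerm fuzzyX :=
      ⟨enumAtom, ⟨1, by simp [FinitePerm], by simp⟩, rfl⟩
    rw [h] at hmem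
    obtain ⟨π, hπ, heq⟩ := hmem
    have hall : ∀ a : Atom, π a = a + 1 := by
      intro a
      obtain ⟨n, rfl⟩ := enumAtom_surj a
      have := congrFun heq n
      rw [← this]
      rfl
    have : {a : Atom | π a ≠ a} = Set.univ := by
      ext a; simp [hall a]
    rw [FinitePerm, this] at hπ
    exact Set.infinite_univ hπ
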